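/- Let a ≥ 1 and b ≥ 1 be natural numbers, θ > 0, κ > 0, χ > 0, N > 0, β > 0 reals with v = β − 1/(2χ√N) > 0 and μ = β + 1/(2χ√N). Define G(x) = (1 − e^{−θx} Σ_{p=0}^{b−1} (θx)^p/p!)^a. Then χ√N · ∫_v^μ G(x/κ) dx = 1 + χ√N · Σ_{p=1}^{a} Σ_{δ} (−1)^p · C(a,p) · (p!/(δ_0!···δ_{b−1}!)) · (Π_{q=0}^{b−1} (θ^q/q!)^{δ_q}) · κ^{−φ(δ)} · ω̂^{−φ(δ)−1} · (Γ(φ(δ)+1, ω̂v) − Γ(φ(δ)+1, ω̂μ)), where the inner sum runs over all tuples δ = (δ_0,…,δ_{b−1}) of nonnegative integers with δ_0 + ⋯ + δ_{b−1} = p, φ(δ) = Σ_{q=0}^{b−1} q·δ_q, ω̂ = pθ/κ, and Γ(s,x) = ∫_x^∞ t^{s−1} e^{−t} dt. (This is the exact closed form of the own-message average BLER ε̄_L^{x_L} of the low-priority user in Theorems 2 and 4, with κ = α_L γ₀.) -/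

import Mathlib

open MeasureTheory Set

lemma aux_integrable (m : ℕ) : IntegrableOn (fun t : ℝ => t ^ m * Real.exp (-t)) (Ioi 0) := by
  have h := Real.GammaIntegral_convergent (s := (m : ℝ) + 1) (by positivity)
  have : (fun x : ℝ => Real.exp (-x) * x ^ ((m : ℝ) + 1 - 1)) =
      fun t : ℝ => t ^ m * Real.exp (-t) := by
    funext x
    rw [show (m : ℝ) + 1 - 1 = (m : ℝ) by ring, Real.rpow_natCast, mul_comm]
  rwa [this] at h

lemma aux_key (m : ℕ) (c : ℝ) (hc : 0 < c) (v μ : ℝ) (h0 : 0 < v) (hvμ : v ≤ μ) :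
    ∫ x in v..μ, x ^ m * Real.exp (-c * x) =
      c ^ (-(m : ℤ) - 1) *
        ((∫ t in Ioi (c * v), t ^ m * Real.exp (-t)) -
          ∫ t in Ioi (c * μ), t ^ m * Real.exp (-t)) := by
  have hcv : (0:ℝ) < c * v := mul_pos hc h0
  have hle : c * v ≤ c * μ := mul_le_mul_of_nonneg_left hvμ hc.le
  have hIv : IntegrableOn (fun t : ℝ => t ^ m * Real.exp (-t)) (Ioi (c * v)) :=
    (aux_integrable m).mono_set (Ioi_subset_Ioi hcv.le)
  have hsplit : (∫ t in Ioi (c * v), t ^ m * Real.exp (-t)) =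
      (∫ t in Ioc (c * v) (c * μ), t ^ m * Real.exp (-t)) +
        ∫ t in Ioi (c * μ), t ^ m * Real.exp (-t) := by
    rw [← setIntegral_union (Ioc_disjoint_Ioi le_rfl) measurableSet_Ioi
      (hIv.mono_set Ioc_subset_Ioi_self) (hIv.mono_set (Ioi_subset_Ioi hle)),
      Ioc_union_Ioi_eq_Ioi hle]
  have hinterval : (∫ t in Ioi (c * v), t ^ m * Real.exp (-t)) -
      (∫ t in Ioi (c * μ), t ^ m * Real.exp (-t)) =
      ∫ t in (c*v)..(c*μ), t ^ m * Real.exp (-t) := by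
    rw [hsplit, intervalIntegral.integral_of_le hle]; ring
  have hcomp : (∫ x in v..μ, (fun t : ℝ => t ^ m * Real.exp (-t)) (c * x)) =
      c⁻¹ • ∫ t in (c*v)..(c*μ), t ^ m * Real.exp (-t) :=
    intervalIntegral.integral_comp_mul_left (fun t : ℝ => t ^ m * Real.exp (-t)) hc.ne'
  have hpt : (∫ x in v..μ, x ^ m * Real.exp (-c * x)) =
      ∫ x in v..μ, (c ^ m)⁻¹ * ((c * x) ^ m * Real.exp (-(c * x))) := by
    apply intervalIntegral.integral_congr
    intro x _
    simp only [neg_mul, mul_pow]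
    field_simp
  rw [hpt, intervalIntegral.integral_const_mul, hcomp, hinterval.symm,
    zpow_sub_one₀ hc.ne', zpow_neg, zpow_natCast]
  simp [smul_eq_mul]
  ring

lemma aux_expand (a b : ℕ) (θ κ x : ℝ) (hκ : κ ≠ 0) :
    (1 - Real.exp (-θ * (x / κ)) * ∑ p ∈ Finset.range b, (θ * (x / κ)) ^ p / p.factorial) ^ a =
      1 + ∑ p ∈ Finset.Icc 1 a, ∑ δ ∈ Finset.Nat.antidiagonalTuple b p,
        ((-1 : ℝ) ^ p * (a.choose p : ℝ) * (Nat.multinomial Finset.univ δ : ℝ) *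
          (∏ q : Fin b, (θ ^ (q : ℕ) / ((q : ℕ).factorial : ℝ)) ^ δ q) *
          κ ^ (-((∑ q : Fin b, (q : ℕ) * δ q : ℕ) : ℤ))) *
          (x ^ (∑ q : Fin b, (q : ℕ) * δ q) *
            Real.exp (-((p : ℝ) * θ / κ) * x)) := by
  set u : ℝ := Real.exp (-θ * (x / κ)) * ∑ p ∈ Finset.range b, (θ * (x / κ)) ^ p / p.factorial
    with hu
  have hp : ∀ p : ℕ, (-u) ^ p * (a.choose p : ℝ) =
      ∑ δ ∈ Finset.Nat.antidiagonalTuple b p,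
        ((-1 : ℝ) ^ p * (a.choose p : ℝ) * (Nat.multinomial Finset.univ δ : ℝ) *
          (∏ q : Fin b, (θ ^ (q : ℕ) / ((q : ℕ).factorial : ℝ)) ^ δ q) *
          κ ^ (-((∑ q : Fin b, (q : ℕ) * δ q : ℕ) : ℤ))) *
          (x ^ (∑ q : Fin b, (q : ℕ) * δ q) * Real.exp (-((p : ℝ) * θ / κ) * x)) := by
    intro p
    have hE : (Real.exp (-θ * (x / κ))) ^ p = Real.exp (-((p : ℝ) * θ / κ) * x) := by
      rw [← Real.exp_nat_mul]
      congr 1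
      ring
    have hS : (∑ q ∈ Finset.range b, (θ * (x / κ)) ^ q / (q.factorial : ℝ)) ^ p =
        ∑ δ ∈ Finset.Nat.antidiagonalTuple b p,
          (Nat.multinomial Finset.univ δ : ℝ) *
            ∏ q : Fin b, ((θ * (x / κ)) ^ (q : ℕ) / ((q : ℕ).factorial : ℝ)) ^ δ q := by
      rw [Finset.sum_range fun q => (θ * (x / κ)) ^ q / (q.factorial : ℝ),
        Finset.sum_pow_eq_sum_piAntidiag, Finset.piAntidiag_univ_fin_eq_antidiagonalTuple]
    rw [hu, neg_pow, mul_pow, hE, hS, Finset.mul_sum, Finset.mul_sum, Finset.sum_mul]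
    refine Finset.sum_congr rfl fun δ hδ => ?_
    have hprod : (∏ q : Fin b, ((θ * (x / κ)) ^ (q : ℕ) / ((q : ℕ).factorial : ℝ)) ^ δ q) =
        (∏ q : Fin b, (θ ^ (q : ℕ) / ((q : ℕ).factorial : ℝ)) ^ δ q) *
          (x / κ) ^ (∑ q : Fin b, (q : ℕ) * δ q) := by
      rw [← Finset.prod_pow_eq_pow_sum, ← Finset.prod_mul_distrib]
      refine Finset.prod_congr rfl fun q _ => ?_
      rw [mul_pow, pow_mul, ← mul_pow]
      ring_nf
    rw [hprod, zpow_neg, zpow_natCast, div_pow]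
    field_simp
  have h1 : (1 - u) ^ a = ∑ p ∈ Finset.range (a + 1), (-u) ^ p * (a.choose p : ℝ) := by
    rw [sub_eq_add_neg, add_comm, add_pow]
    simp
  rw [h1, Finset.sum_range_succ']
  simp only [pow_zero, Nat.choose_zero_right, Nat.cast_one, mul_one]
  rw [add_comm]
  congr 1
  rw [← Finset.Ico_add_one_right_eq_Icc, Finset.sum_Ico_eq_sum_range]
  exact Finset.sum_congr (by rw [Nat.add_sub_cancel]) fun i _ => by
    rw [← hp (1 + i), add_comm 1 i]

noncomputable def coefC (a b : ℕ) (θ κ : ℝ) (p : ℕ) (δ : Fin b → ℕ) : ℝ :=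
  (-1 : ℝ) ^ p * (a.choose p : ℝ) * (Nat.multinomial Finset.univ δ : ℝ) *
    (∏ q : Fin b, (θ ^ (q : ℕ) / ((q : ℕ).factorial : ℝ)) ^ δ q) *
    κ ^ (-((∑ q : Fin b, (q : ℕ) * δ q : ℕ) : ℤ))

set_option maxHeartbeats 1600000 in
/-- Exact closed form of the own-message average BLER of the low-priority user
(Theorems 2 and 4, term `ε̄_L^{x_L}` with `κ = α_L γ₀`):
`χ√N ∫_v^μ G(x/κ) dx
  = 1 + χ√N Σ_{p=1}^{a} Σ_{δ} (−1)^p C(a,p) (p!/(δ₀!⋯δ_{b−1}!))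
      (Π_q (θ^q/q!)^{δ_q}) κ^{−φ(δ)} ω̂^{−φ(δ)−1} (Γ(φ(δ)+1, ω̂v) − Γ(φ(δ)+1, ω̂μ))`
with `ω̂ = pθ/κ` and `Γ(s,x) = ∫_x^∞ t^{s−1} e^{−t} dt`. -/
theorem stmt_17 (a b : ℕ) (ha : 1 ≤ a) (hb : 1 ≤ b)
    (θ κ χ N β : ℝ) (hθ : 0 < θ) (hκ : 0 < κ) (hχ : 0 < χ) (hN : 0 < N) (hβ : 0 < β)
    (v μ : ℝ) (hv : v = β - 1 / (2 * χ * Real.sqrt N))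
    (hμ : μ = β + 1 / (2 * χ * Real.sqrt N)) (hv0 : 0 < v)
    (G : ℝ → ℝ)
    (hG : ∀ x, G x =
      (1 - Real.exp (-θ * x) * ∑ p ∈ Finset.range b, (θ * x) ^ p / p.factorial) ^ a) :
    χ * Real.sqrt N * ∫ x in v..μ, G (x / κ) =
      1 + χ * Real.sqrt N *
        ∑ p ∈ Finset.Icc 1 a, ∑ δ ∈ Finset.Nat.antidiagonalTuple b p,
          (-1 : ℝ) ^ p * (a.choose p : ℝ) * (Nat.multinomial Finset.univ δ : ℝ) *
            (∏ q : Fin b, (θ ^ (q : ℕ) / ((q : ℕ).factorial : ℝ)) ^ δ q) *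
            κ ^ (-((∑ q : Fin b, (q : ℕ) * δ q : ℕ) : ℤ)) *
            ((p : ℝ) * θ / κ) ^ (-((∑ q : Fin b, (q : ℕ) * δ q : ℕ) : ℤ) - 1) *
            ((∫ t in Set.Ioi ((p : ℝ) * θ / κ * v),
                t ^ (∑ q : Fin b, (q : ℕ) * δ q) * Real.exp (-t)) -
              ∫ t in Set.Ioi ((p : ℝ) * θ / κ * μ),
                t ^ (∑ q : Fin b, (q : ℕ) * δ q) * Real.exp (-t)) := by
  have hκ0 : κ ≠ 0 := hκ.ne'
  have hs : 0 < χ * Real.sqrt N := mul_pos hχ (Real.sqrt_pos.mpr hN)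
  have hvμ : v < μ := by
    rw [hv, hμ]
    have h2 : 0 < 1 / (2 * χ * Real.sqrt N) := by positivity
    linarith
  have hμv : μ - v = 1 / (χ * Real.sqrt N) := by
    rw [hv, hμ]
    have h2 : (2 : ℝ) * (χ * Real.sqrt N) ≠ 0 := by positivity
    field_simp
    ring
  have hGx : ∀ x : ℝ, G (x / κ) =
      1 + ∑ p ∈ Finset.Icc 1 a, ∑ δ ∈ Finset.Nat.antidiagonalTuple b p,
        coefC a b θ κ p δ * (x ^ (∑ q : Fin b, (q : ℕ) * δ q) *
          Real.exp (-((p : ℝ) * θ / κ) * x)) := fun x => by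
    rw [hG]
    simp only [coefC]
    exact aux_expand a b θ κ x hκ0
  have hci : ∀ (p : ℕ) (δ : Fin b → ℕ), IntervalIntegrable
      (fun x : ℝ => coefC a b θ κ p δ * (x ^ (∑ q : Fin b, (q : ℕ) * δ q) *
        Real.exp (-((p : ℝ) * θ / κ) * x))) volume v μ := by
    intro p δ
    apply Continuous.intervalIntegrable
    fun_prop
  have step1 : (∫ x in v..μ, G (x / κ)) =
      (μ - v) + ∑ p ∈ Finset.Icc 1 a, ∑ δ ∈ Finset.Nat.antidiagonalTuple b p,
        coefC a b θ κ p δ * ∫ x in v..μ, x ^ (∑ q : Fin b, (q : ℕ) * δ q) *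
          Real.exp (-((p : ℝ) * θ / κ) * x) := by
    have hsum2 : ∀ p : ℕ, IntervalIntegrable (fun x : ℝ =>
        ∑ δ ∈ Finset.Nat.antidiagonalTuple b p,
          coefC a b θ κ p δ * (x ^ (∑ q : Fin b, (q : ℕ) * δ q) *
            Real.exp (-((p : ℝ) * θ / κ) * x))) volume v μ := by
      intro p
      apply Continuous.intervalIntegrable
      apply continuous_finset_sum
      intro δ _
      fun_prop
    have hsum : IntervalIntegrable (fun x : ℝ => ∑ p ∈ Finset.Icc 1 a,
        ∑ δ ∈ Finset.Nat.antidiagonalTuple b p,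
          coefC a b θ κ p δ * (x ^ (∑ q : Fin b, (q : ℕ) * δ q) *
            Real.exp (-((p : ℝ) * θ / κ) * x))) volume v μ := by
      apply Continuous.intervalIntegrable
      apply continuous_finset_sum
      intro p _
      apply continuous_finset_sum
      intro δ _
      fun_prop
    rw [intervalIntegral.integral_congr (fun x _ => hGx x)]
    rw [intervalIntegral.integral_add intervalIntegrable_const hsum]
    rw [intervalIntegral.integral_const, smul_eq_mul, mul_one]
    rw [intervalIntegral.integral_finset_sum (fun p _ => hsum2 p)]
    congr 1
    refine Finset.sum_congr rfl fun p _ => ?_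
    rw [intervalIntegral.integral_finset_sum (fun δ _ => hci p δ)]
    exact Finset.sum_congr rfl fun δ _ => intervalIntegral.integral_const_mul _ _
  have step2 : ∀ p ∈ Finset.Icc 1 a, ∀ δ ∈ Finset.Nat.antidiagonalTuple b p,
      coefC a b θ κ p δ * (∫ x in v..μ, x ^ (∑ q : Fin b, (q : ℕ) * δ q) *
          Real.exp (-((p : ℝ) * θ / κ) * x)) =
      coefC a b θ κ p δ * (((p : ℝ) * θ / κ) ^ (-((∑ q : Fin b, (q : ℕ) * δ q : ℕ) : ℤ) - 1) *
        ((∫ t in Set.Ioi ((p : ℝ) * θ / κ * v),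
            t ^ (∑ q : Fin b, (q : ℕ) * δ q) * Real.exp (-t)) -
          ∫ t in Set.Ioi ((p : ℝ) * θ / κ * μ),
            t ^ (∑ q : Fin b, (q : ℕ) * δ q) * Real.exp (-t))) := by
    intro p hp δ _
    have hp1 : 1 ≤ p := (Finset.mem_Icc.mp hp).1
    have hp0 : (0 : ℝ) < (p : ℝ) := by exact_mod_cast Nat.lt_of_lt_of_le Nat.zero_lt_one hp1
    have hc : 0 < (p : ℝ) * θ / κ := by positivity
    rw [aux_key _ _ hc v μ hv0 hvμ.le]
  rw [step1, Finset.sum_congr rfl fun p hp => Finset.sum_congr rfl fun δ hδ => step2 p hp δ hδ,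
    mul_add, hμv]
  rw [mul_one_div, div_self hs.ne']
  congr 2
  refine Finset.sum_congr rfl fun p _ => Finset.sum_congr rfl fun δ _ => ?_
  simp only [coefC]
  ring
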